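/- arXiv:1507.08268 — 2 statements merged into one kernel-verified Lean document; each statement's English description precedes it below -/
import Mathlib

section
/- Suppose A : ℝ^N → ℝ^M satisfies: for all x, y ∈ K̄_s with x - y ∈ Λ_{K₀} and A(x) = A(y), one has ‖x - y‖₂ ≤ ε, where Λ_{K₀} = {v : K₀‖v‖_∞² ≤ ‖v‖₂²}. Let λ > 0, x₀ ∈ K̄_s with ‖x₀‖_∞ ≤ λ, and let x* minimize ‖u‖_♯ over {u : A(u) = A(x₀), ‖u‖₂ ≤ 1, ‖u‖_∞ ≤ λ}. Then ‖x₀ - x*‖₂ ≤ ε + 2λ√K₀. -/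
open Finset

/-- Euclidean norm on `Fin N → ℝ`. -/
noncomputable def l2norm {N : ℕ} (x : Fin N → ℝ) : ℝ := Real.sqrt (∑ i, x i ^ 2)

/-- Sup norm on `Fin N → ℝ` (for `N` nonempty). -/
noncomputable def linfnorm {N : ℕ} [Nonempty (Fin N)] (x : Fin N → ℝ) : ℝ :=
  Finset.univ.sup' Finset.univ_nonempty fun i => |x i|

/-- Proposition 3, CoBP_λ stability for sub-Gaussian sensing. -/
theorem cobp_lambda_stability (N M : ℕ) [Nonempty (Fin N)] (ε s K₀ lam : ℝ)
    (hs : 0 < s) (hε : 0 < ε) (hK₀ : 0 ≤ K₀) (hlam : 0 < lam)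
    (sharp : (Fin N → ℝ) → ℝ)
    (sharp_tri : ∀ x y, sharp (x + y) ≤ sharp x + sharp y)
    (sharp_smul : ∀ (c : ℝ) x, sharp (c • x) = |c| * sharp x)
    (sharp_def : ∀ x, sharp x = 0 → x = 0)
    (A : (Fin N → ℝ) → (Fin M → ℝ))
    (hA : ∀ x y : Fin N → ℝ,
      (sharp x ≤ s ∧ l2norm x ≤ 1) → (sharp y ≤ s ∧ l2norm y ≤ 1) →
      K₀ * linfnorm (x - y) ^ 2 ≤ l2norm (x - y) ^ 2 →
      A x = A y → l2norm (x - y) ≤ ε)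
    (x₀ xstar : Fin N → ℝ)
    (hx₀ : sharp x₀ ≤ s ∧ l2norm x₀ ≤ 1) (hx₀inf : linfnorm x₀ ≤ lam)
    (hfeas : A xstar = A x₀ ∧ l2norm xstar ≤ 1 ∧ linfnorm xstar ≤ lam)
    (hmin : ∀ u : Fin N → ℝ,
      A u = A x₀ ∧ l2norm u ≤ 1 ∧ linfnorm u ≤ lam → sharp xstar ≤ sharp u) :
    l2norm (x₀ - xstar) ≤ ε + 2 * lam * Real.sqrt K₀ := by
  have hsum : (0:ℝ) ≤ ∑ i, (x₀ - xstar) i ^ 2 := Finset.sum_nonneg fun i _ => sq_nonneg _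
  have hl2nn : 0 ≤ l2norm (x₀ - xstar) := Real.sqrt_nonneg _
  have hl2sq : l2norm (x₀ - xstar) ^ 2 = ∑ i, (x₀ - xstar) i ^ 2 := Real.sq_sqrt hsum
  have hsharp : sharp xstar ≤ s := le_trans (hmin x₀ ⟨rfl, hx₀.2, hx₀inf⟩) hx₀.1
  have hinf : linfnorm (x₀ - xstar) ≤ 2 * lam := by
    apply Finset.sup'_le
    intro i _
    have h1 : |x₀ i| ≤ lam := le_trans (Finset.le_sup' (fun j => |x₀ j|) (Finset.mem_univ i)) hx₀inf
    have h2 : |xstar i| ≤ lam := le_trans (Finset.le_sup' (fun j => |xstar j|) (Finset.mem_univ i)) hfeas.2.2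
    calc |(x₀ - xstar) i| = |x₀ i - xstar i| := rfl
      _ ≤ |x₀ i| + |xstar i| := abs_sub _ _
      _ ≤ 2 * lam := by linarith
  by_cases hcase : K₀ * linfnorm (x₀ - xstar) ^ 2 ≤ l2norm (x₀ - xstar) ^ 2
  · have := hA x₀ xstar hx₀ ⟨hsharp, hfeas.2.1⟩ hcase hfeas.1.symm
    nlinarith [Real.sqrt_nonneg K₀]
  · push_neg at hcase
    have hinfnn : 0 ≤ linfnorm (x₀ - xstar) :=
      le_trans (abs_nonneg _) (Finset.le_sup' (fun j => |(x₀ - xstar) j|) (Finset.mem_univ (Classical.arbitrary _)))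
    have h1 : l2norm (x₀ - xstar) ^ 2 ≤ (2 * lam * Real.sqrt K₀) ^ 2 := by
      have hsq : Real.sqrt K₀ ^ 2 = K₀ := Real.sq_sqrt hK₀
      have hmono : linfnorm (x₀ - xstar) ^ 2 ≤ (2 * lam) ^ 2 := by nlinarith
      nlinarith [mul_le_mul_of_nonneg_left hmono hK₀]
    have h2 : l2norm (x₀ - xstar) ≤ 2 * lam * Real.sqrt K₀ := by
      calc l2norm (x₀ - xstar) = Real.sqrt (l2norm (x₀ - xstar) ^ 2) := (Real.sqrt_sq hl2nn).symm
        _ ≤ Real.sqrt ((2 * lam * Real.sqrt K₀) ^ 2) := Real.sqrt_le_sqrt h1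
        _ = 2 * lam * Real.sqrt K₀ := Real.sqrt_sq (by positivity)
    linarith
end

section
/- Let t ∈ ℝ be fixed, ξ ∼ U([-δ/2, δ/2]), and Q the midrise quantizer of resolution δ. Then the quantization error n := Q(t + ξ) - (t + ξ) is uniformly distributed on [-δ/2, δ/2]. -/
open MeasureTheory

/-- Midrise quantizer of resolution `δ`. -/
noncomputable def midriseQ (δ t : ℝ) : ℝ := δ * ((⌊t / δ⌋ : ℝ) + 1 / 2)

/-- Uniform probability measure on `[-δ/2, δ/2]`. -/
noncomputable def unifDither (δ : ℝ) : Measure ℝ :=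
  (ENNReal.ofReal δ)⁻¹ • volume.restrict (Set.Icc (-(δ / 2)) (δ / 2))

lemma midriseErr_measurable (δ : ℝ) :
    Measurable (fun x : ℝ => midriseQ δ x - x) := by
  unfold midriseQ
  have h1 : Measurable fun x : ℝ => ((⌊x / δ⌋ : ℤ) : ℝ) :=
    measurable_from_top.comp (measurable_id.div_const δ).floor
  exact ((h1.add_const (1 / 2)).const_mul δ).sub measurable_id

lemma midriseErr_periodic {δ : ℝ} (hδ : 0 < δ) (x : ℝ) (n : ℤ) :
    midriseQ δ (x + n * δ) - (x + n * δ) = midriseQ δ x - x := by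
  unfold midriseQ
  have h : (x + n * δ) / δ = x / δ + n := by
    field_simp
  rw [h, Int.floor_add_intCast]
  push_cast
  ring

lemma map_midriseErr_restrict {δ : ℝ} (hδ : 0 < δ) (c : ℝ) :
    Measure.map (fun x : ℝ => midriseQ δ x - x)
        (volume.restrict (Set.Ioc c (c + δ))) =
      Measure.map (fun x : ℝ => midriseQ δ x - x)
        (volume.restrict (Set.Ioc 0 (0 + δ))) := by
  haveI : Fact (0 < δ) := ⟨hδ⟩
  set F : ℝ → ℝ := fun x => midriseQ δ x - x with hF
  have hFm : Measurable F := midriseErr_measurable δ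
  set e : AddCircle δ → ℝ :=
    fun y => ((AddCircle.measurableEquivIoc δ 0 y : Set.Ioc 0 (0 + δ)) : ℝ) with he
  have hem : Measurable e :=
    measurable_subtype_coe.comp (AddCircle.measurableEquivIoc δ 0).measurable
  have key : ∀ x : ℝ, (F ∘ e) ((x : AddCircle δ)) = F x := by
    intro x
    have h1 : ((e (x : AddCircle δ) : ℝ) : AddCircle δ) = (x : AddCircle δ) :=
      (AddCircle.equivIoc δ 0).symm_apply_apply (x : AddCircle δ)
    have h2 : e (x : AddCircle δ) - x ∈ AddSubgroup.zmultiples δ :=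
      (QuotientAddGroup.eq_iff_sub_mem).mp h1
    obtain ⟨n, hn⟩ := (AddSubgroup.mem_zmultiples_iff).mp h2
    rw [zsmul_eq_mul] at hn
    have hx : e (x : AddCircle δ) = x + n * δ := by linarith
    simp only [Function.comp_apply, hx, F]
    exact midriseErr_periodic hδ x n
  have comp_eq : ∀ c' : ℝ,
      Measure.map F (volume.restrict (Set.Ioc c' (c' + δ))) =
        Measure.map (F ∘ e) (volume : Measure (AddCircle δ)) := by
    intro c'
    have hmk := AddCircle.measurePreserving_mk δ c'
    calc Measure.map F (volume.restrict (Set.Ioc c' (c' + δ)))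
        = Measure.map (F ∘ e)
            (Measure.map (fun x : ℝ => (x : AddCircle δ))
              (volume.restrict (Set.Ioc c' (c' + δ)))) := by
          rw [Measure.map_map (hFm.comp hem) AddCircle.measurable_mk']
          exact (Measure.map_congr (Filter.Eventually.of_forall
            (fun x => (key x).symm))).symm ▸ rfl
      _ = Measure.map (F ∘ e) (volume : Measure (AddCircle δ)) := by rw [hmk.map_eq]
  rw [comp_eq c, comp_eq 0]

/-- with a uniform dither `ξ`, the quantization error
`Q(t + ξ) - (t + ξ)` is again uniform on `[-δ/2, δ/2]`, for any fixed `t`. -/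
theorem dithered_quantization_error_uniform (δ t : ℝ) (hδ : 0 < δ) :
    Measure.map (fun ξ => midriseQ δ (t + ξ) - (t + ξ)) (unifDither δ) =
      unifDither δ := by
  set F : ℝ → ℝ := fun x => midriseQ δ x - x with hF
  have hFm : Measurable F := midriseErr_measurable δ
  have hIccIoc : volume.restrict (Set.Icc (-(δ / 2)) (δ / 2)) =
      volume.restrict (Set.Ioc (-(δ / 2)) (δ / 2)) :=
    (Measure.restrict_congr_set Ioc_ae_eq_Icc).symm
  unfold unifDither
  rw [Measure.map_smul, hIccIoc]
  congr 1
  -- now : map f (volume.restrict Ioc) = volume.restrict Ioc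
  have hcomp : (fun ξ : ℝ => midriseQ δ (t + ξ) - (t + ξ)) = F ∘ (fun ξ => t + ξ) := rfl
  rw [hcomp, ← Measure.map_map hFm (measurable_const_add t)]
  -- map (t + ·) of the restricted measure
  have hshift : Measure.map (fun ξ : ℝ => t + ξ)
      (volume.restrict (Set.Ioc (-(δ / 2)) (δ / 2))) =
      volume.restrict (Set.Ioc (t - δ / 2) (t - δ / 2 + δ)) := by
    have hpre : Set.Ioc (-(δ / 2)) (δ / 2) =
        (fun ξ : ℝ => t + ξ) ⁻¹' (Set.Ioc (t - δ / 2) (t - δ / 2 + δ)) := by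
      ext x
      simp only [Set.mem_preimage, Set.mem_Ioc]
      constructor <;> intro h <;> constructor <;> linarith [h.1, h.2]
    rw [hpre, ← Measure.restrict_map (measurable_const_add t) measurableSet_Ioc,
      (measurePreserving_add_left volume t).map_eq]
  rw [hshift, map_midriseErr_restrict hδ (t - δ / 2)]
  -- on Ioc 0 δ (a.e. = Ico 0 δ), F x = δ/2 - x
  have hIco : volume.restrict (Set.Ioc (0:ℝ) (0 + δ)) =
      volume.restrict (Set.Ico (0:ℝ) (0 + δ)) := by
    rw [← Measure.restrict_congr_set Ioo_ae_eq_Ioc,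
      Measure.restrict_congr_set Ioo_ae_eq_Ico]
  rw [hIco]
  have hae : F =ᵐ[volume.restrict (Set.Ico (0:ℝ) (0 + δ))] (fun x => δ / 2 - x) := by
    filter_upwards [ae_restrict_mem measurableSet_Ico] with x hx
    obtain ⟨h0, h1⟩ := hx
    have hfloor : ⌊x / δ⌋ = 0 := by
      apply Int.floor_eq_zero_iff.mpr
      constructor
      · positivity
      · rw [div_lt_one hδ]; simpa using h1
    simp only [F, midriseQ, hfloor]
    push_cast
    ring
  rw [Measure.map_congr hae]
  have hpre2 : Set.Ico (0:ℝ) (0 + δ) =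
      (fun x : ℝ => δ / 2 - x) ⁻¹' (Set.Ioc (-(δ / 2)) (δ / 2)) := by
    ext x
    simp only [Set.mem_preimage, Set.mem_Ioc, Set.mem_Ico]
    constructor <;> intro h <;> constructor <;> linarith [h.1, h.2]
  rw [hpre2, ← Measure.restrict_map (measurable_const_sub _) measurableSet_Ioc,
    Measure.map_sub_left_eq_self volume (δ / 2)]
end
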